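/- For all real numbers t and u, and for all sequences (ε_n) of positive reals with ε_n → 0 and (B_n) of reals with B_n·ε_n → +∞, the sequence 1/(1 + exp(−B_n(t − u + ε_n))) converges to 1 if t ≥ u, and converges to 0 if t < u. -/

import Mathlib

open Filter Topology

theorem stmt_1 (t u : ℝ) (ε B : ℕ → ℝ)
    (hε_pos : ∀ n, 0 < ε n)
    (hε_lim : Tendsto ε atTop (𝓝 0))
    (hBε : Tendsto (fun n => B n * ε n) atTop atTop) :
    (t ≥ u → Tendsto (fun n => 1 / (1 + Real.exp (-(B n) * (t - u + ε n)))) atTop (𝓝 1)) ∧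
    (t < u → Tendsto (fun n => 1 / (1 + Real.exp (-(B n) * (t - u + ε n)))) atTop (𝓝 0)) := by
  -- B is eventually positive
  have hBpos : ∀ᶠ n in atTop, 0 < B n := by
    filter_upwards [hBε.eventually_gt_atTop 0] with n hn
    by_contra h
    push_neg at h
    nlinarith [hε_pos n]
  have hB : Tendsto B atTop atTop := by
    have hε1 : ∀ᶠ n in atTop, ε n ≤ 1 := by
      filter_upwards [hε_lim.eventually (gt_mem_nhds (by norm_num : (0:ℝ) < 1))] with n hn
      linarith
    refine tendsto_atTop_mono' _ ?_ hBε
    filter_upwards [hBpos, hε1] with n h1 h2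
    nlinarith
  constructor
  · intro htu
    have hexp : Tendsto (fun n => -(B n) * (t - u + ε n)) atTop atBot := by
      refine tendsto_atBot_mono' _ ?_ (tendsto_neg_atTop_atBot.comp hBε)
      filter_upwards [hBpos] with n h1
      simp only [Function.comp_apply]
      nlinarith [hε_pos n]
    have h0 : Tendsto (fun n => Real.exp (-(B n) * (t - u + ε n))) atTop (𝓝 0) :=
      Real.tendsto_exp_atBot.comp hexp
    have h1 : Tendsto (fun n => 1 + Real.exp (-(B n) * (t - u + ε n))) atTop (𝓝 1) := by
      simpa using tendsto_const_nhds.add h0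
    have := (tendsto_const_nhds (x := (1:ℝ)) (f := atTop)).div h1 (by norm_num)
    simpa [Pi.div_def] using this
  · intro htu
    have hexp : Tendsto (fun n => -(B n) * (t - u + ε n)) atTop atTop := by
      have hεsmall : ∀ᶠ n in atTop, ε n ≤ (u - t) / 2 := by
        filter_upwards [hε_lim.eventually (gt_mem_nhds (by linarith : (0:ℝ) < (u - t)/2))] with n hn
        linarith
      have hhalf : Tendsto (fun n => B n * ((u - t) / 2)) atTop atTop :=
        hB.atTop_mul_const (by linarith)
      refine tendsto_atTop_mono' _ ?_ hhalf
      filter_upwards [hBpos, hεsmall] with n h1 h2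
      nlinarith
    have h0 : Tendsto (fun n => 1 + Real.exp (-(B n) * (t - u + ε n))) atTop atTop :=
      tendsto_atTop_add_const_left _ 1 (Real.tendsto_exp_atTop.comp hexp)
    simpa [one_div, Pi.inv_def] using h0.inv_tendsto_atTop
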